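/- Let H be a pre-Hilbert left 𝕆-module, u ∈ H an associative element ((pq)·u = p·(q·u) for all p,q ∈ 𝕆), and v ∈ H a conjugate associative element ((pq)·v = q·(p·v) for all p,q ∈ 𝕆). Then ⟨u, v⟩ = 0. -/

import Mathlib

noncomputable section

/-- The octonions, realized as the Cayley–Dickson double of the quaternions. -/
abbrev 𝕆 : Type := Quaternion ℝ × Quaternion ℝ

/-- Octonion multiplication via the Cayley–Dickson formula
`(a,b)(c,d) = (ac - d̄b, da + bc̄)`. -/
def omul (x y : 𝕆) : 𝕆 :=
  (x.1 * y.1 - star y.2 * x.2, y.2 * x.1 + x.2 * star y.1)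

/-- Octonionic conjugation. -/
def oconj (x : 𝕆) : 𝕆 := (star x.1, -x.2)

/-- The octonion `1`. -/
def oone : 𝕆 := (1, 0)

/-- Real part of an octonion. -/
def ore (x : 𝕆) : ℝ := x.1.re

/-- Embedding of the reals into the octonions. -/
def oreal (r : ℝ) : 𝕆 := ((r : Quaternion ℝ), 0)

/-- Squared norm of an octonion. -/
def onormSq (x : 𝕆) : ℝ := ore (omul x (oconj x))

/-- A pre-Hilbert left `𝕆`-module: a real vector space `H` with an `ℝ`-linear
left `𝕆`-scalar multiplication `sm` satisfying `1·x = x` and the alternating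
left-associator law, together with an `ℝ`-bilinear `𝕆`-valued inner product `inn`
which is `𝕆`-para-linear, hermitian and positive definite. -/
structure PreHilbO (H : Type*) [AddCommGroup H] [Module ℝ H] where
  sm : 𝕆 →ₗ[ℝ] H →ₗ[ℝ] H
  inn : H →ₗ[ℝ] H →ₗ[ℝ] 𝕆
  one_sm : ∀ x : H, sm oone x = x
  alt : ∀ (p q : 𝕆) (x : H),
    sm (omul p q) x - sm p (sm q x) = -(sm (omul q p) x - sm q (sm p x))
  para : ∀ (p : 𝕆) (u v : H), ore (inn (sm p u) v - omul p (inn u v)) = 0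
  herm : ∀ u v : H, inn u v = oconj (inn v u)
  pos : ∀ u : H, ∃ r : ℝ, 0 ≤ r ∧ inn u u = oreal r
  posdef : ∀ u : H, inn u u = 0 → u = 0



lemma ore_sub (x y : 𝕆) : ore (x - y) = ore x - ore y := by
  simp [ore]

lemma ore_comm (a b : 𝕆) : ore (omul a b) = ore (omul b a) := by
  simp only [ore, omul, Quaternion.re_sub, Quaternion.re_mul, Quaternion.re_star,
    Quaternion.imI_star, Quaternion.imJ_star, Quaternion.imK_star]
  ring

lemma ore_assoc (a b c : 𝕆) : ore (omul (omul a b) c) = ore (omul a (omul b c)) := by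
  simp only [ore, omul, Quaternion.re_sub, Quaternion.re_add, Quaternion.re_mul,
    Quaternion.imI_sub, Quaternion.imI_add, Quaternion.imI_mul,
    Quaternion.imJ_sub, Quaternion.imJ_add, Quaternion.imJ_mul,
    Quaternion.imK_sub, Quaternion.imK_add, Quaternion.imK_mul,
    Quaternion.re_star, Quaternion.imI_star, Quaternion.imJ_star, Quaternion.imK_star]
  ring

lemma ore_omul_oconj (q x : 𝕆) : ore (omul q (oconj x)) = ore (omul (oconj q) x) := by
  simp only [ore, omul, oconj, Quaternion.re_sub, Quaternion.re_mul, Quaternion.re_neg,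
    Quaternion.imI_neg, Quaternion.imJ_neg, Quaternion.imK_neg,
    Quaternion.re_star, Quaternion.imI_star, Quaternion.imJ_star, Quaternion.imK_star]
  ring

lemma key_ore (p q x : 𝕆) :
    ore (omul (omul p (oconj q)) x) = ore (omul q (omul (oconj p) (oconj x))) := by
  simp only [ore, omul, oconj, Quaternion.re_sub, Quaternion.re_add, Quaternion.re_mul,
    Quaternion.imI_sub, Quaternion.imI_add, Quaternion.imI_mul,
    Quaternion.imJ_sub, Quaternion.imJ_add, Quaternion.imJ_mul,
    Quaternion.imK_sub, Quaternion.imK_add, Quaternion.imK_mul,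
    Quaternion.re_neg, Quaternion.imI_neg, Quaternion.imJ_neg, Quaternion.imK_neg,
    Quaternion.re_star, Quaternion.imI_star, Quaternion.imJ_star, Quaternion.imK_star]
  ring

def qmk (a b c d : ℝ) : Quaternion ℝ := ⟨a, b, c, d⟩

lemma qmk_re (a b c d : ℝ) : (qmk a b c d).re = a := rfl
lemma qmk_imI (a b c d : ℝ) : (qmk a b c d).imI = b := rfl
lemma qmk_imJ (a b c d : ℝ) : (qmk a b c d).imJ = c := rfl
lemma qmk_imK (a b c d : ℝ) : (qmk a b c d).imK = d := rfl

lemma oct_ext (x y : 𝕆) (h : ∀ q : 𝕆, ore (omul q x) = ore (omul q y)) : x = y := by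
  have h1 := h ((qmk 1 0 0 0), 0)
  have h2 := h ((qmk 0 1 0 0), 0)
  have h3 := h ((qmk 0 0 1 0), 0)
  have h4 := h ((qmk 0 0 0 1), 0)
  have h5 := h (0, (qmk 1 0 0 0))
  have h6 := h (0, (qmk 0 1 0 0))
  have h7 := h (0, (qmk 0 0 1 0))
  have h8 := h (0, (qmk 0 0 0 1))
  simp only [ore, omul, Quaternion.re_sub, Quaternion.re_mul,
    Quaternion.re_star, Quaternion.imI_star, Quaternion.imJ_star, Quaternion.imK_star,
    Quaternion.re_zero, Quaternion.imI_zero, Quaternion.imJ_zero, Quaternion.imK_zero,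
    Prod.fst_zero, Prod.snd_zero, qmk_re, qmk_imI, qmk_imJ, qmk_imK] at h1 h2 h3 h4 h5 h6 h7 h8
  refine Prod.ext (QuaternionAlgebra.ext ?_ ?_ ?_ ?_) (QuaternionAlgebra.ext ?_ ?_ ?_ ?_) <;>
    linarith

/-- An associative element is orthogonal to a conjugate associative element. -/
theorem stmt_8 {H : Type*} [AddCommGroup H] [Module ℝ H] (h : PreHilbO H)
    (u v : H)
    (hu : ∀ p q : 𝕆, h.sm (omul p q) u = h.sm p (h.sm q u))
    (hv : ∀ p q : 𝕆, h.sm (omul p q) v = h.sm q (h.sm p v)) :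
    h.inn u v = 0 := by
  -- para-linearity in "ore" form
  have para' : ∀ (p : 𝕆) (a b : H),
      ore (h.inn (h.sm p a) b) = ore (omul p (h.inn a b)) := by
    intro p a b
    have := h.para p a b
    rw [ore_sub, sub_eq_zero] at this
    exact this
  -- full 𝕆-linearity in the first slot against the associative element u
  have B1 : ∀ (p : 𝕆) (w : H), h.inn (h.sm p u) w = omul p (h.inn u w) := by
    intro p w
    apply oct_ext
    intro q
    calc ore (omul q (h.inn (h.sm p u) w))
        = ore (h.inn (h.sm q (h.sm p u)) w) := (para' q _ w).symm
      _ = ore (h.inn (h.sm (omul q p) u) w) := by rw [hu]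
      _ = ore (omul (omul q p) (h.inn u w)) := para' _ u w
      _ = ore (omul q (omul p (h.inn u w))) := ore_assoc q p _
  -- conjugate 𝕆-linearity in the second slot against the conjugate associative v
  have B2 : ∀ (p : 𝕆) (w : H), h.inn w (h.sm p v) = omul (oconj p) (h.inn w v) := by
    intro p w
    apply oct_ext
    intro q
    calc ore (omul q (h.inn w (h.sm p v)))
        = ore (omul q (oconj (h.inn (h.sm p v) w))) := by rw [← h.herm]
      _ = ore (omul (oconj q) (h.inn (h.sm p v) w)) := ore_omul_oconj q _
      _ = ore (h.inn (h.sm (oconj q) (h.sm p v)) w) := (para' _ _ w).symm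
      _ = ore (h.inn (h.sm (omul p (oconj q)) v) w) := by rw [hv]
      _ = ore (omul (omul p (oconj q)) (h.inn v w)) := para' _ v w
      _ = ore (omul q (omul (oconj p) (oconj (h.inn v w)))) := key_ore p q _
      _ = ore (omul q (omul (oconj p) (h.inn w v))) := by rw [← h.herm]
  set c := h.inn u v with hc
  have key : ∀ p q : 𝕆, omul (oconj q) (omul p c) = omul p (omul (oconj q) c) := by
    intro p q
    have e1 : h.inn (h.sm p u) (h.sm q v) = omul (oconj q) (omul p c) := by
      rw [B2 q (h.sm p u), B1 p v]
    have e2 : h.inn (h.sm p u) (h.sm q v) = omul p (omul (oconj q) c) := by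
      rw [B1 p (h.sm q v), B2 q u]
    rw [← e1, e2]
  have E := key ((qmk 0 1 0 0), 0) ((qmk 0 0 (-1) 0), 0)
  rw [Prod.ext_iff] at E
  obtain ⟨E1, E2⟩ := E
  rw [Quaternion.ext_iff] at E1 E2
  obtain ⟨a1, a2, a3, a4⟩ := E1
  obtain ⟨b1, b2, b3, b4⟩ := E2
  simp only [omul, oconj, Quaternion.re_mul, Quaternion.imI_mul, Quaternion.imJ_mul,
    Quaternion.imK_mul, Quaternion.re_sub, Quaternion.imI_sub, Quaternion.imJ_sub,
    Quaternion.imK_sub, Quaternion.re_add, Quaternion.imI_add, Quaternion.imJ_add,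
    Quaternion.imK_add, Quaternion.re_neg, Quaternion.imI_neg, Quaternion.imJ_neg,
    Quaternion.imK_neg, Quaternion.re_star, Quaternion.imI_star, Quaternion.imJ_star,
    Quaternion.imK_star, Quaternion.re_zero, Quaternion.imI_zero, Quaternion.imJ_zero,
    Quaternion.imK_zero, Prod.fst_zero, Prod.snd_zero, neg_zero, neg_neg,
    mul_zero, zero_mul, mul_one, one_mul, mul_neg, neg_mul, sub_zero, zero_sub,
    add_zero, zero_add, qmk_re, qmk_imI, qmk_imJ, qmk_imK] at a1 a2 a3 a4 b1 b2 b3 b4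
  refine Prod.ext (QuaternionAlgebra.ext ?_ ?_ ?_ ?_) (QuaternionAlgebra.ext ?_ ?_ ?_ ?_) <;>
    simp only [Prod.fst_zero, Prod.snd_zero, Quaternion.re_zero, Quaternion.imI_zero,
      Quaternion.imJ_zero, Quaternion.imK_zero] <;> linarith
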